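/- For any two strings X and Y of the same length n, and any partition points 0 = j_0 < j_1 < ... < j_B = n, and any integer shifts s_1, ..., s_B, the edit distance ED(X, Y) is at most the sum over i of ED(X[j_{i-1}..j_i), Y[j_{i-1}+s_i .. j_i+s_i)) + 2|s_i|. -/

import Mathlib

open Finset

/-- Cost structure for edit distance (removed from Mathlib; restored with its old meaning). -/
structure Levenshtein.Cost (α β δ : Type*) where
  delete : α → δ
  insert : β → δ
  substitute : α → β → δ

/-- Unit costs, as in the old `Levenshtein.defaultCost`. -/
def Levenshtein.defaultCost {α : Type*} [DecidableEq α] : Levenshtein.Cost α α ℕ where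
  delete _ := 1
  insert _ := 1
  substitute a b := if a = b then 0 else 1

/-- Levenshtein distance, by the recursion the old Mathlib `levenshtein` satisfied
(`levenshtein_nil_nil`, `levenshtein_nil_cons`, `levenshtein_cons_nil`, `levenshtein_cons_cons`). -/
def levenshtein {α β δ : Type*} [AddZeroClass δ] [Min δ] (C : Levenshtein.Cost α β δ) :
    List α → List β → δ
  | [], [] => 0
  | [], y :: ys => C.insert y + levenshtein C [] ys
  | x :: xs, [] => C.delete x + levenshtein C xs []
  | x :: xs, y :: ys =>
    min (C.delete x + levenshtein C xs (y :: ys))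
      (min (C.insert y + levenshtein C (x :: xs) ys) (C.substitute x y + levenshtein C xs ys))

/-- Edit distance of two lists (unit-cost Levenshtein distance). -/
def ED {α : Type*} [DecidableEq α] (X Y : List α) : ℕ :=
  levenshtein Levenshtein.defaultCost X Y

/-- Clamped substring `X[a..b)`: out-of-bounds indices are clamped to `[0, |X|)`. -/
def sub {α : Type*} (X : List α) (a b : ℤ) : List α :=
  (X.take b.toNat).drop a.toNat

/-- Hamming distance between (equal-length) lists. -/
def HD {α : Type*} [DecidableEq α] (X Y : List α) : ℕ :=
  ((X.zip Y).filter (fun p => p.1 ≠ p.2)).length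

/-- `A` is an optimal alignment between `X` and `Y`. -/
def IsOptAlign {α : Type*} [DecidableEq α] (X Y : List α) (A : ℕ → ℕ) : Prop :=
  A 0 = 0 ∧ A X.length = Y.length ∧
    (∀ i j, i ≤ j → j ≤ X.length → A i ≤ A j) ∧
    ED X Y = ∑ i ∈ Finset.range X.length,
      ED (sub X i (i + 1)) (sub Y (A i) (A (i + 1)))

section Lemmas

section LevenshteinAPI

variable {α β δ : Type*} [AddZeroClass δ] [Min δ] (C : Levenshtein.Cost α β δ)

@[simp] theorem levenshtein_nil_nil : levenshtein C [] [] = 0 := by rw [levenshtein]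

@[simp] theorem levenshtein_nil_cons (y : β) (ys : List β) :
    levenshtein C [] (y :: ys) = C.insert y + levenshtein C [] ys := by rw [levenshtein]

@[simp] theorem levenshtein_cons_nil (x : α) (xs : List α) :
    levenshtein C (x :: xs) [] = C.delete x + levenshtein C xs [] := by rw [levenshtein]

theorem levenshtein_cons_cons (x : α) (xs : List α) (y : β) (ys : List β) :
    levenshtein C (x :: xs) (y :: ys) =
      min (C.delete x + levenshtein C xs (y :: ys))
        (min (C.insert y + levenshtein C (x :: xs) ys) (C.substitute x y + levenshtein C xs ys)) := by
  rw [levenshtein]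

end LevenshteinAPI

@[simp] theorem Levenshtein.defaultCost_delete {α : Type*} [DecidableEq α] (a : α) :
    (Levenshtein.defaultCost : Levenshtein.Cost α α ℕ).delete a = 1 := rfl

@[simp] theorem Levenshtein.defaultCost_insert {α : Type*} [DecidableEq α] (a : α) :
    (Levenshtein.defaultCost : Levenshtein.Cost α α ℕ).insert a = 1 := rfl

@[simp] theorem Levenshtein.defaultCost_substitute {α : Type*} [DecidableEq α] (a b : α) :
    (Levenshtein.defaultCost : Levenshtein.Cost α α ℕ).substitute a b = if a = b then 0 else 1 :=
  rfl

variable {α : Type*} [DecidableEq α]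

lemma ED_nil_left (y : List α) : ED [] y = y.length := by
  induction y with
  | nil => simp [ED]
  | cons c y ih => simp [ED] at ih ⊢; omega

lemma ED_nil_right (x : List α) : ED x [] = x.length := by
  induction x with
  | nil => simp [ED]
  | cons c x ih => simp [ED] at ih ⊢; omega

lemma ED_self (x : List α) : ED x x = 0 := by
  induction x with
  | nil => simp [ED]
  | cons a x ih =>
    simp only [ED, levenshtein_cons_cons, Levenshtein.defaultCost_substitute] at ih ⊢
    simp only [if_pos rfl, if_true]
    omega

lemma ED_cons_right_le (x : List α) (c : α) (y : List α) :
    ED x (c :: y) ≤ 1 + ED x y := by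
  cases x with
  | nil => simp [ED_nil_left]
  | cons a x => simp only [ED, levenshtein_cons_cons, Levenshtein.defaultCost_insert]; omega

lemma ED_cons_left_le (a : α) (x y : List α) :
    ED (a :: x) y ≤ 1 + ED x y := by
  cases y with
  | nil => simp [ED_nil_right]
  | cons b y => simp only [ED, levenshtein_cons_cons, Levenshtein.defaultCost_delete]; omega

lemma length_le_ED_add (x y : List α) : x.length ≤ ED x y + y.length := by
  induction x generalizing y with
  | nil => simp
  | cons a x ih =>
    induction y with
    | nil => simp [ED_nil_right]
    | cons b y ihy =>
      have h1 := ih (b :: y)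
      have h2 := ih y
      simp only [ED, levenshtein_cons_cons, Levenshtein.defaultCost_delete,
        Levenshtein.defaultCost_insert, Levenshtein.defaultCost_substitute,
        List.length_cons] at *
      by_cases hab : a = b <;> simp [hab] at * <;> omega
lemma ED_append_le (x₁ x₂ y₁ y₂ : List α) :
    ED (x₁ ++ x₂) (y₁ ++ y₂) ≤ ED x₁ y₁ + ED x₂ y₂ := by
  induction x₁ generalizing y₁ with
  | nil =>
    simp only [List.nil_append, ED_nil_left]
    induction y₁ with
    | nil => simp
    | cons b y₁ ihy =>
      have := ED_cons_right_le x₂ b (y₁ ++ y₂)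
      simp only [List.cons_append, List.length_cons] at *
      omega
  | cons a x₁ ih =>
    induction y₁ with
    | nil =>
      simp only [List.nil_append, ED_nil_right]
      have h1 := ED_cons_left_le a (x₁ ++ x₂) y₂
      have h2 := ih [] -- not directly usable; instead induct
      -- prove ED ((a::x₁)++x₂) y₂ ≤ (a::x₁).length + ED x₂ y₂ directly
      clear h2
      have : ∀ p : List α, ED (p ++ x₂) y₂ ≤ p.length + ED x₂ y₂ := by
        intro p
        induction p with
        | nil => simp
        | cons c p ihp =>
          have := ED_cons_left_le c (p ++ x₂) y₂
          simp only [List.cons_append, List.length_cons] at *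
          omega
      simpa using this (a :: x₁)
    | cons b y₁ ihy =>
      have h1 := ih (b :: y₁)
      have h2 := ihy
      have h3 := ih y₁
      simp only [List.cons_append] at *
      simp only [ED, levenshtein_cons_cons, Levenshtein.defaultCost_delete,
        Levenshtein.defaultCost_insert, Levenshtein.defaultCost_substitute] at *
      by_cases hab : a = b <;> simp [hab] at * <;> omega

lemma ED_prefix_insert (x p y : List α) : ED x (p ++ y) ≤ p.length + ED x y := by
  induction p with
  | nil => simp
  | cons c p ihp =>
    have := ED_cons_right_le x c (p ++ y)
    simp only [List.cons_append, List.length_cons] at *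
    omega

lemma ED_suffix_insert (x y q : List α) : ED x (y ++ q) ≤ ED x y + q.length := by
  have := ED_append_le x ([] : List α) y q
  simpa [ED_nil_left] using this

lemma ED_cons_right_ge (x : List α) (c : α) (y : List α) :
    ED x y ≤ ED x (c :: y) + 1 := by
  induction x generalizing y with
  | nil => simp [ED_nil_left]; omega
  | cons a x ih =>
    cases y with
    | nil =>
      have := length_le_ED_add (a :: x) [c]
      simp only [ED_nil_right, List.length_cons, List.length_nil] at *
      omega
    | cons b y =>
      have h1 := ih (b :: y)
      have h2 := ED_cons_left_le a x (b :: y)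
      simp only [ED, levenshtein_cons_cons, Levenshtein.defaultCost_delete,
        Levenshtein.defaultCost_insert, Levenshtein.defaultCost_substitute] at *
      by_cases hab : a = b <;> simp [hab] at * <;> omega
lemma ED_prefix_delete (x p y : List α) : ED x y ≤ ED x (p ++ y) + p.length := by
  induction p with
  | nil => simp
  | cons c p ihp =>
    have := ED_cons_right_ge x c (p ++ y)
    simp only [List.cons_append, List.length_cons] at *
    omega

lemma ED_snoc_right_ge (x : List α) (y : List α) (c : α) :
    ED x y ≤ ED x (y ++ [c]) + 1 := by
  induction x generalizing y with
  | nil => simp [ED_nil_left]; omega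
  | cons a x ih =>
    induction y with
    | nil =>
      have := length_le_ED_add (a :: x) [c]
      simp only [ED_nil_right, List.length_cons, List.length_nil, List.nil_append] at *
      omega
    | cons b y ihy =>
      have h1 := ih (b :: y)
      have h2 := ih y
      simp only [List.cons_append] at *
      simp only [ED, levenshtein_cons_cons, Levenshtein.defaultCost_delete,
        Levenshtein.defaultCost_insert, Levenshtein.defaultCost_substitute] at *
      by_cases hab : a = b <;> simp [hab] at * <;> omega
lemma ED_suffix_delete (x y q : List α) : ED x y ≤ ED x (y ++ q) + q.length := by
  induction q generalizing y with
  | nil => simp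
  | cons c q ihq =>
    have h1 := ED_snoc_right_ge x y c
    have h2 := ihq (y ++ [c])
    have he : (y ++ [c]) ++ q = y ++ (c :: q) := by simp
    rw [he] at h2
    simp only [List.length_cons] at *
    omega

lemma split_sum (B : ℕ) (X Y : List α) (j : ℕ → ℕ)
    (hm : ∀ a b, a ≤ b → b ≤ B → j a ≤ j b)
    (hj0 : j 0 = 0)
    (hX : X.length = j B) (hY : Y.length = j B) :
    ED X Y ≤ ∑ i ∈ Finset.range B,
      ED ((X.take (j (i + 1))).drop (j i)) ((Y.take (j (i + 1))).drop (j i)) := by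
  induction B generalizing X Y with
  | zero =>
    have hx : X = [] := List.length_eq_zero_iff.mp (by rw [hX, hj0])
    have hy : Y = [] := List.length_eq_zero_iff.mp (by rw [hY, hj0])
    simp [hx, hy, ED]
  | succ B ih =>
    rw [Finset.sum_range_succ]
    have hjB : j B ≤ j (B + 1) := hm B (B + 1) (Nat.le_succ _) le_rfl
    have key : ED X Y ≤ ED (X.take (j B)) (Y.take (j B)) +
        ED (X.drop (j B)) (Y.drop (j B)) := by
      conv_lhs => rw [← List.take_append_drop (j B) X, ← List.take_append_drop (j B) Y]
      exact ED_append_le _ _ _ _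
    have hdropX : X.drop (j B) = (X.take (j (B + 1))).drop (j B) := by
      rw [← hX, List.take_length]
    have hdropY : Y.drop (j B) = (Y.take (j (B + 1))).drop (j B) := by
      rw [← hY, List.take_length]
    have hfirst : ED (X.take (j B)) (Y.take (j B)) ≤ ∑ i ∈ Finset.range B,
        ED ((X.take (j (i + 1))).drop (j i)) ((Y.take (j (i + 1))).drop (j i)) := by
      have hlX : (X.take (j B)).length = j B := by
        rw [List.length_take, hX]; omega
      have hlY : (Y.take (j B)).length = j B := by
        rw [List.length_take, hY]; omega
      have := ih (X.take (j B)) (Y.take (j B))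
        (fun a b hab hb => hm a b hab (hb.trans (Nat.le_succ _))) hlX hlY
      refine this.trans (le_of_eq (Finset.sum_congr rfl fun i hi => ?_))
      have hi' : i + 1 ≤ B := Finset.mem_range.mp hi
      have hji : j (i + 1) ≤ j B := hm (i + 1) B hi' (Nat.le_succ _)
      rw [List.take_take, List.take_take, min_eq_left hji]
    rw [← hdropX, ← hdropY] at *
    omega

lemma shift_block (x Y : List α) (a b : ℕ) (s : ℤ) :
    ED x (sub Y a b) ≤ ED x (sub Y (a + s) (b + s)) + 2 * s.natAbs := by
  have hZ : sub Y a b = (Y.take b).drop a := by simp [sub]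
  rcases le_or_gt 0 s with hs | hs
  · lift s to ℕ using hs with t
    have ha' : ((a : ℤ) + (t : ℤ)).toNat = a + t := by omega
    have hb' : ((b : ℤ) + (t : ℤ)).toNat = b + t := by omega
    have hW : sub Y ((a : ℤ) + t) ((b : ℤ) + t) = (Y.take (b + t)).drop (a + t) := by
      simp only [sub, ha', hb']
    rw [hZ, hW]
    have hw : ((Y.take b).drop a).drop t = (Y.take b).drop (a + t) := by
      rw [List.drop_drop]
    have hsplit : Y.take (b + t) = Y.take b ++ (Y.take (b + t)).drop b := by
      conv_lhs => rw [← List.take_append_drop b (Y.take (b + t))]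
      rw [List.take_take, min_eq_left (by omega)]
    have hWdecomp : (Y.take (b + t)).drop (a + t) =
        (Y.take b).drop (a + t) ++
          ((Y.take (b + t)).drop b).drop (a + t - (Y.take b).length) := by
      conv_lhs => rw [hsplit]
      rw [List.drop_append]
    have hq : (((Y.take (b + t)).drop b).drop (a + t - (Y.take b).length)).length ≤ t := by
      simp only [List.length_drop, List.length_take]; omega
    have hp : ((((Y.take b).drop a)).take t).length ≤ t := by
      simp only [List.length_take]; omega
    have step1 : ED x ((Y.take b).drop a) ≤
        ((((Y.take b).drop a)).take t).length + ED x (((Y.take b).drop a).drop t) := by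
      conv_lhs => rw [← List.take_append_drop t ((Y.take b).drop a)]
      exact ED_prefix_insert _ _ _
    have step2 := ED_suffix_delete x ((Y.take b).drop (a + t))
      (((Y.take (b + t)).drop b).drop (a + t - (Y.take b).length))
    rw [← hWdecomp] at step2
    rw [hw] at step1
    simp only [Int.natAbs_natCast]
    omega
  · obtain ⟨t, hts⟩ : ∃ t : ℕ, s = -(t : ℤ) := ⟨s.natAbs, by omega⟩
    have hna : s.natAbs = t := by omega
    have ha' : ((a : ℤ) + s).toNat = a - t := by omega
    have hb' : ((b : ℤ) + s).toNat = b - t := by omega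
    have hW : sub Y ((a : ℤ) + s) ((b : ℤ) + s) = (Y.take (b - t)).drop (a - t) := by
      simp only [sub, ha', hb']
    rw [hZ, hW]
    have hw : ((Y.take (b - t)).drop (a - t)).drop (a - (a - t)) = (Y.take (b - t)).drop a := by
      rw [List.drop_drop]
      congr 1
      omega
    have hsplit : Y.take b = Y.take (b - t) ++ (Y.take b).drop (b - t) := by
      conv_lhs => rw [← List.take_append_drop (b - t) (Y.take b)]
      rw [List.take_take, min_eq_left (by omega)]
    have hZdecomp : (Y.take b).drop a =
        (Y.take (b - t)).drop a ++
          ((Y.take b).drop (b - t)).drop (a - (Y.take (b - t)).length) := by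
      conv_lhs => rw [hsplit]
      rw [List.drop_append]
    have hq : (((Y.take b).drop (b - t)).drop (a - (Y.take (b - t)).length)).length ≤ t := by
      simp only [List.length_drop, List.length_take]; omega
    have hp : (((Y.take (b - t)).drop (a - t)).take (a - (a - t))).length ≤ t := by
      simp only [List.length_take]; omega
    have step1 := ED_suffix_insert x ((Y.take (b - t)).drop a)
      (((Y.take b).drop (b - t)).drop (a - (Y.take (b - t)).length))
    rw [← hZdecomp] at step1
    have step2 := ED_prefix_delete x
      (((Y.take (b - t)).drop (a - t)).take (a - (a - t)))
      (((Y.take (b - t)).drop (a - t)).drop (a - (a - t)))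
    rw [List.take_append_drop, hw] at step2
    omega

end Lemmas

theorem divide_and_conquer_lower_bound {α : Type*} [DecidableEq α]
    (n B : ℕ) (X Y : List α) (hX : X.length = n) (hY : Y.length = n)
    (j : ℕ → ℕ) (hj0 : j 0 = 0) (hjB : j B = n)
    (hmono : ∀ i < B, j i < j (i + 1)) (s : ℕ → ℤ) :
    ED X Y ≤ ∑ i ∈ Finset.range B,
      (ED (sub X (j i) (j (i + 1)))
          (sub Y (j i + s i) (j (i + 1) + s i)) + 2 * (s i).natAbs) := by
  have hm0 : ∀ b, b ≤ B → ∀ a, a ≤ b → j a ≤ j b := by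
    intro b
    induction b with
    | zero =>
      intro _ a ha
      have : a = 0 := by omega
      simp [this]
    | succ b ihb =>
      intro hb a ha
      rcases Nat.eq_or_lt_of_le ha with h | h
      · rw [h]
      · exact (ihb (by omega) a (by omega)).trans (hmono b (by omega)).le
  have hm : ∀ a b, a ≤ b → b ≤ B → j a ≤ j b := fun a b hab hb => hm0 b hb a hab
  have h1 : ED X Y ≤ ∑ i ∈ Finset.range B,
      ED ((X.take (j (i + 1))).drop (j i)) ((Y.take (j (i + 1))).drop (j i)) :=
    split_sum B X Y j hm hj0 (by omega) (by omega)
  refine h1.trans (Finset.sum_le_sum fun i _ => ?_)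
  have hsub : ((X.take (j (i + 1))).drop (j i)) = sub X (j i) (j (i + 1)) := by
    simp [sub]
  have := shift_block ((X.take (j (i + 1))).drop (j i)) Y (j i) (j (i + 1)) (s i)
  rw [hsub] at this
  have hZ : sub Y (j i) (j (i + 1)) = (Y.take (j (i + 1))).drop (j i) := by
    simp [sub]
  rw [hZ] at this
  exact this
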